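/- Let m ≥ 2, n ≥ 2, and 1 ≤ k ≤ n−1 be integers with (m,n) ≠ (2,2), and let p be a positive integer coprime to m·(n−1). Set ζ = exp(2πi·p/(m·(n−1))) ∈ ℂ and, for an integer j, set μ_j = exp(2πi·j/m) ∈ ℂ. Then the complex number D = m · (ζ^{n−k} − 1) · (ζ^{k−1} − ζ^{k}·μ_p) · (ζ^{k} − 1) · Π_{j=1}^{n−k−1} (ζ^{m·j} − 1) is nonzero, and ζ^{k + m·k(k−1)/2} · (ζ^{n} − 1) · (ζ^{n−k−1} − μ_p) · (ζ^{k−1} − μ_p) · ( Π_{i=k}^{n−2} (ζ^{m·i} − 1) ) · ( Π_{j ∈ {0,…,m−1}, j ≠ p mod m} (ζ^{n−1} − μ_j) ) / D = (−1)^k. -/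

import Mathlib

open Complex Finset


/-- Evaluation of Malle's generic degree of `⋀^k V^{σ_p}` for `G(m,m,n)` (with
`(m,n) ≠ (2,2)`) at the primitive root of unity `ζ = ζ_{m(n−1)}^p`: the denominator
`D = m·(ζ^{n−k} − 1)·(ζ^{k−1} − ζ^k μ_p)·(ζ^k − 1)·Π_{j=1}^{n−k−1}(ζ^{mj} − 1)` is nonzero
and the quotient equals `(−1)^k`. -/
theorem generic_degree_eval_G_m_m_n (m n k p : ℕ) (hm : 2 ≤ m) (hn : 2 ≤ n)
    (hk1 : 1 ≤ k) (hkn : k ≤ n - 1) (hmn : ¬(m = 2 ∧ n = 2)) (hp : 1 ≤ p)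
    (hcop : Nat.Coprime p (m * (n - 1))) :
    let ζ : ℂ := Complex.exp (2 * Real.pi * Complex.I * p / (m * (n - 1)))
    let μ : ℕ → ℂ := fun j => Complex.exp (2 * Real.pi * Complex.I * j / m)
    let D : ℂ := m * (ζ ^ (n - k) - 1) * (ζ ^ (k - 1) - ζ ^ k * μ p) * (ζ ^ k - 1) *
      ∏ j ∈ Finset.Icc 1 (n - k - 1), (ζ ^ (m * j) - 1)
    D ≠ 0 ∧
      ζ ^ (k + m * (k * (k - 1) / 2)) * (ζ ^ n - 1) * (ζ ^ (n - k - 1) - μ p) *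
          (ζ ^ (k - 1) - μ p) *
          (∏ i ∈ Finset.Icc k (n - 2), (ζ ^ (m * i) - 1)) *
          (∏ j ∈ (Finset.range m).filter (fun j => j ≠ p % m), (ζ ^ (n - 1) - μ j)) / D =
        (-1) ^ k := by
  intro ζ μ D
  have hζdef : ζ = Complex.exp (2 * Real.pi * Complex.I * p / (m * ((n:ℂ) - 1))) := rfl
  have hμdef : ∀ j : ℕ, μ j = Complex.exp (2 * Real.pi * Complex.I * j / m) := fun _ => rfl
  have hDdef : D = m * (ζ ^ (n - k) - 1) * (ζ ^ (k - 1) - ζ ^ k * μ p) * (ζ ^ k - 1) *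
      ∏ j ∈ Finset.Icc 1 (n - k - 1), (ζ ^ (m * j) - 1) := rfl
  have hn1 : (1:ℕ) ≤ n - 1 := by omega
  have hH0 : m * (n - 1) ≠ 0 := by positivity
  have hHpos : 0 < m * (n - 1) := Nat.pos_of_ne_zero hH0
  have hm0 : (m:ℂ) ≠ 0 := Nat.cast_ne_zero.mpr (by omega)
  have hn1C : ((n - 1 : ℕ) : ℂ) = (n:ℂ) - 1 := by
    push_cast [Nat.cast_sub (show 1 ≤ n by omega)]; ring
  have hn1C0 : ((n - 1 : ℕ) : ℂ) ≠ 0 := Nat.cast_ne_zero.mpr (by omega)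
  have hnC1 : (n:ℂ) - 1 ≠ 0 := by rw [← hn1C]; exact hn1C0
  have hHC : ((m * (n - 1) : ℕ) : ℂ) = (m:ℂ) * ((n:ℂ) - 1) := by
    push_cast [Nat.cast_sub (show 1 ≤ n by omega)]; ring
  have hHC0 : ((m * (n - 1) : ℕ) : ℂ) ≠ 0 := Nat.cast_ne_zero.mpr hH0
  -- the basic primitive root
  set ξ : ℂ := Complex.exp (2 * Real.pi * Complex.I / (m * (n-1) : ℕ)) with hξdef
  have hξ : IsPrimitiveRoot ξ (m * (n - 1)) := Complex.isPrimitiveRoot_exp _ hH0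
  have hξpow : ∀ x : ℕ, ξ ^ x
      = Complex.exp (2 * Real.pi * Complex.I * x / ((m * (n-1) : ℕ) : ℂ)) := by
    intro x
    rw [hξdef, ← Complex.exp_nat_mul]
    congr 1
    ring
  have hζξ : ζ = ξ ^ p := by
    rw [hξpow, hζdef, hHC]
  have hζprim : IsPrimitiveRoot ζ (m * (n - 1)) := by
    rw [hζξ]; exact (hξ.pow_iff_coprime hHpos p).mpr hcop
  have hζne : ζ ≠ 0 := by rw [hζdef]; exact Complex.exp_ne_zero _
  have hexp : ∀ a : ℕ, ζ ^ a = ξ ^ (p * a) := by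
    intro a; rw [hζξ, ← pow_mul]
  -- the order-m primitive root
  have hqm : p % m < m := Nat.mod_lt _ (by omega)
  set η : ℂ := Complex.exp (2 * Real.pi * Complex.I / m) with hηdef
  have hη : IsPrimitiveRoot η m := Complex.isPrimitiveRoot_exp _ (by omega)
  have hηpow : ∀ x : ℕ, η ^ x = Complex.exp (2 * Real.pi * Complex.I * x / m) := by
    intro x; rw [hηdef, ← Complex.exp_nat_mul]; congr 1; ring
  have hμη : ∀ j : ℕ, μ j = η ^ j := fun j => by rw [hμdef, hηpow]
  have hηmod : ∀ x : ℕ, η ^ (x % m) = η ^ x := by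
    intro x
    conv_rhs => rw [← Nat.div_add_mod x m]
    rw [pow_add, pow_mul, hη.pow_eq_one, one_pow, one_mul]
  have hζη : ζ ^ (n - 1) = η ^ (p % m) := by
    rw [hηmod, hexp, hξpow, hηpow, hHC]
    congr 1
    push_cast [Nat.cast_sub (show 1 ≤ n by omega)]
    rw [div_eq_div_iff (mul_ne_zero hm0 hnC1) hm0]
    ring
  have hμp : μ p = ζ ^ (n - 1) := by
    rw [hμη p, hζη, hηmod]
  -- bounds
  have h2le : 2 * (n - 1) ≤ m * (n - 1) := Nat.mul_le_mul_right _ hm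
  have hHn1 : n - 1 < m * (n - 1) := by omega
  have hnH : n < m * (n - 1) := by
    rcases (show n = 2 ∨ 3 ≤ n by omega) with h2 | h3
    · have hm3 : 3 ≤ m := by omega
      have : 3 * (n - 1) ≤ m * (n - 1) := Nat.mul_le_mul_right _ hm3
      omega
    · omega
  -- factor identities
  have f2 : ζ ^ (n - k - 1) - μ p = -(ζ ^ (n - k - 1) * (ζ ^ k - 1)) := by
    have h1 : ζ ^ (n - k - 1) * ζ ^ k = ζ ^ (n - 1) := by
      rw [← pow_add]; congr 1; omega
    rw [hμp]; linear_combination h1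
  have f3 : ζ ^ (k - 1) - μ p = -(ζ ^ (k - 1) * (ζ ^ (n - k) - 1)) := by
    have h1 : ζ ^ (k - 1) * ζ ^ (n - k) = ζ ^ (n - 1) := by
      rw [← pow_add]; congr 1; omega
    rw [hμp]; linear_combination h1
  have f4 : ζ ^ (k - 1) - ζ ^ k * μ p = -(ζ ^ (k - 1) * (ζ ^ n - 1)) := by
    have h1 : ζ ^ (k - 1) * ζ ^ n = ζ ^ k * ζ ^ (n - 1) := by
      rw [← pow_add, ← pow_add]; congr 1; omega
    rw [hμp]; linear_combination h1
  -- the product over Icc k (n-2)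
  set S : ℕ := ∑ i ∈ Finset.Icc k (n-2), i with hSdef
  set P2 : ℂ := ∏ j ∈ Finset.Icc 1 (n - k - 1), (ζ ^ (m * j) - 1) with hP2def
  have f5 : ∏ i ∈ Finset.Icc k (n - 2), (ζ ^ (m * i) - 1)
      = (-1:ℂ) ^ (n - k - 1) * ζ ^ (m * S) * P2 := by
    have hcard : (Finset.Icc k (n-2)).card = n - k - 1 := by
      rw [Nat.card_Icc]; omega
    have step : ∀ i ∈ Finset.Icc k (n-2),
        ζ ^ (m * i) - 1 = (-1) * ζ ^ (m * i) * (ζ ^ (m * (n - 1 - i)) - 1) := by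
      intro i hi
      simp only [Finset.mem_Icc] at hi
      have h1 : ζ ^ (m * i) * ζ ^ (m * (n - 1 - i)) = 1 := by
        rw [← pow_add, ← Nat.mul_add, show i + (n - 1 - i) = n - 1 by omega]
        exact hζprim.pow_eq_one
      linear_combination h1
    rw [Finset.prod_congr rfl step, Finset.prod_mul_distrib, Finset.prod_mul_distrib,
      Finset.prod_const, hcard, Finset.prod_pow_eq_pow_sum, ← Finset.mul_sum, ← hSdef]
    congr 1
    rw [hP2def]
    refine Finset.prod_nbij' (i := fun i => n - 1 - i) (j := fun j => n - 1 - j)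
      ?_ ?_ ?_ ?_ ?_
    · intro a ha; simp only [Finset.mem_Icc] at *; omega
    · intro a ha; simp only [Finset.mem_Icc] at *; omega
    · intro a ha; simp only [Finset.mem_Icc] at ha; omega
    · intro a ha; simp only [Finset.mem_Icc] at ha; omega
    · intro a ha; rfl
  -- the product over the other roots of unity
  have hmod : ∀ x : ℕ, x < 2 * m → x % m = if x < m then x else x - m := by
    intro x hx
    split_ifs with h
    · exact Nat.mod_eq_of_lt h
    · rw [Nat.mod_eq_sub_mod (le_of_not_gt h)]
      exact Nat.mod_eq_of_lt (by omega)
  have f6 : ∏ j ∈ (Finset.range m).filter (fun j => j ≠ p % m), (ζ ^ (n - 1) - μ j)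
      = (m:ℂ) * ζ ^ ((n - 1) * (m - 1)) := by
    rw [Finset.filter_ne']
    have step1 : ∏ j ∈ (Finset.range m).erase (p % m), (ζ ^ (n - 1) - μ j)
        = ∏ t ∈ Finset.range (m - 1), (η ^ (p % m) * (1 - η ^ (t + 1))) := by
      refine (Finset.prod_nbij' (i := fun t => (p % m + 1 + t) % m)
        (j := fun j => (j + (m - 1 - p % m)) % m) ?_ ?_ ?_ ?_ ?_).symm
      · intro t ht
        simp only [Finset.mem_range] at ht
        simp only [Finset.mem_erase, Finset.mem_range]
        rw [hmod _ (by omega)]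
        split_ifs <;> omega
      · intro j hj
        simp only [Finset.mem_erase, Finset.mem_range] at hj
        simp only [Finset.mem_range]
        rw [hmod _ (by omega)]
        split_ifs <;> omega
      · intro t ht
        simp only [Finset.mem_range] at ht
        rw [hmod (p % m + 1 + t) (by omega)]
        split_ifs with h1
        · rw [hmod _ (by omega)]; split_ifs <;> omega
        · rw [hmod _ (by omega)]; split_ifs <;> omega
      · intro j hj
        simp only [Finset.mem_erase, Finset.mem_range] at hj
        rw [hmod (j + (m - 1 - p % m)) (by omega)]
        split_ifs with h1
        · rw [hmod _ (by omega)]; split_ifs <;> omega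
        · rw [hmod _ (by omega)]; split_ifs <;> omega
      · intro t ht
        simp only [Finset.mem_range] at ht
        rw [hζη, hμη]
        have h2 : η ^ ((p % m + 1 + t) % m) = η ^ (p % m) * η ^ (t + 1) := by
          rw [hηmod, show p % m + 1 + t = p % m + (t + 1) by omega, pow_add]
        rw [h2]
        ring
    rw [step1, Finset.prod_mul_distrib, Finset.prod_const, Finset.card_range]
    have hη' : IsPrimitiveRoot η ((m - 1) + 1) := by
      rw [show m - 1 + 1 = m by omega]; exact hη
    rw [hη'.prod_one_sub_pow_eq_order]
    have hcast : ((m - 1 : ℕ) : ℂ) + 1 = (m : ℂ) := by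
      push_cast [Nat.cast_sub (show 1 ≤ m by omega)]; ring
    rw [hcast]
    have h3 : ζ ^ ((n - 1) * (m - 1)) = (η ^ (p % m)) ^ (m - 1) := by
      rw [pow_mul, hζη]
    rw [h3, ← pow_mul, mul_comm]
  -- Gauss sum for S
  have hSz : 2 * (S:ℤ) = ((n:ℤ) - 1) * ((n:ℤ) - 2) - (k:ℤ) * ((k:ℤ) - 1) := by
    have e1 : Finset.Icc k (n-2) = Finset.Ico k (n-1) := by
      ext x; simp only [Finset.mem_Icc, Finset.mem_Ico]; omega
    have e2 : (∑ i ∈ Finset.Ico 0 k, i) + ∑ i ∈ Finset.Ico k (n-1), i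
        = ∑ i ∈ Finset.Ico 0 (n-1), i :=
      Finset.sum_Ico_consecutive _ (Nat.zero_le _) (by omega)
    have g1 : (∑ i ∈ Finset.range k, i) * 2 = k * (k - 1) := Finset.sum_range_id_mul_two k
    have g2 : (∑ i ∈ Finset.range (n-1), i) * 2 = (n-1) * ((n-1) - 1) :=
      Finset.sum_range_id_mul_two (n-1)
    rw [Finset.range_eq_Ico] at g1 g2
    have c1 : ((k * (k-1) : ℕ) : ℤ) = (k:ℤ) * ((k:ℤ) - 1) := by
      rw [Nat.cast_mul]; congr 1; omega
    have c2 : (((n-1) * ((n-1) - 1) : ℕ) : ℤ) = ((n:ℤ) - 1) * ((n:ℤ) - 2) := by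
      rw [Nat.cast_mul]; congr 1 <;> omega
    have e2z : ((∑ i ∈ Finset.Ico 0 k, i : ℕ) : ℤ) + ((∑ i ∈ Finset.Ico k (n-1), i : ℕ) : ℤ)
        = ((∑ i ∈ Finset.Ico 0 (n-1), i : ℕ) : ℤ) := by exact_mod_cast congrArg (Nat.cast : ℕ → ℤ) e2
    have g1z : ((∑ i ∈ Finset.Ico 0 k, i : ℕ) : ℤ) * 2 = (k:ℤ) * ((k:ℤ) - 1) := by
      rw [← c1]; exact_mod_cast congrArg (Nat.cast : ℕ → ℤ) g1
    have g2z : ((∑ i ∈ Finset.Ico 0 (n-1), i : ℕ) : ℤ) * 2 = ((n:ℤ) - 1) * ((n:ℤ) - 2) := by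
      rw [← c2]; exact_mod_cast congrArg (Nat.cast : ℕ → ℤ) g2
    have hSeq : (S:ℤ) = ((∑ i ∈ Finset.Ico k (n-1), i : ℕ) : ℤ) := by
      rw [hSdef, e1]
    rw [hSeq]; linarith
  -- binomial coefficient divisibility
  have h2dvd : 2 ∣ k * (k - 1) := by
    have h := Nat.even_mul_succ_self (k - 1)
    rw [show k - 1 + 1 = k by omega] at h
    rw [Nat.mul_comm]
    exact h.two_dvd
  have hq2 : 2 * (k * (k - 1) / 2) = k * (k - 1) := Nat.mul_div_cancel' h2dvd
  set Q : ℕ := k * (k - 1) / 2 with hQdef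
  have c1' : ((k * (k-1) : ℕ) : ℤ) = (k:ℤ) * ((k:ℤ) - 1) := by
    rw [Nat.cast_mul]; congr 1; omega
  have hq2z : 2 * ((Q : ℕ) : ℤ) = (k:ℤ) * ((k:ℤ) - 1) := by
    rw [← c1']; exact_mod_cast congrArg (Nat.cast : ℕ → ℤ) hq2
  -- the exponent sum
  set T : ℕ := k + m * Q + (n - k - 1) + m * S + (n - 1) * (m - 1) with hTdef
  have hTz : 2 * ((T : ℕ) : ℤ)
      = (m:ℤ) * ((n:ℤ) - 1) * (n:ℤ) := by
    rw [hTdef]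
    push_cast [Nat.cast_sub (show 1 ≤ m by omega), Nat.cast_sub (show 1 ≤ n by omega),
      Nat.cast_sub (show k ≤ n - 1 from hkn), Nat.cast_sub (show 1 ≤ n - k by omega),
      Nat.cast_sub (show k ≤ n by omega)]
    linear_combination (m:ℤ) * hq2z + (m:ℤ) * hSz
  have hTc : 2 * ((T : ℕ) : ℂ)
      = (m:ℂ) * ((n:ℂ) - 1) * (n:ℂ) := by
    have h := congrArg (Int.cast : ℤ → ℂ) hTz
    push_cast at h
    exact_mod_cast h
  -- the key power evaluation
  have keyT : ζ ^ T = (-1:ℂ) ^ n := by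
    rw [hexp, hξpow]
    have harg : 2 * Real.pi * Complex.I *
          ((p * T : ℕ) : ℂ)
          / ((m * (n-1) : ℕ) : ℂ)
        = ((p * n : ℕ) : ℂ) * (Real.pi * Complex.I) := by
      rw [div_eq_iff hHC0, hHC]
      push_cast
      linear_combination (Real.pi * Complex.I * (p:ℂ)) * hTc
    rw [harg, Complex.exp_nat_mul, Complex.exp_pi_mul_I]
    -- parity
    rcases Nat.even_or_odd n with he | ho
    · rw [Even.neg_one_pow (he.mul_left p), Even.neg_one_pow he]
    · have hne : Even (n - 1) := Nat.Odd.sub_odd ho odd_one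
      have hpodd : Odd p := by
        rcases Nat.even_or_odd p with hpe | hpo
        · exfalso
          have h2p : 2 ∣ p := hpe.two_dvd
          have h2H : 2 ∣ m * (n - 1) := Dvd.dvd.mul_left hne.two_dvd m
          have hg := Nat.dvd_gcd h2p h2H
          rw [Nat.Coprime] at hcop
          rw [hcop] at hg
          omega
        · exact hpo
      rw [Odd.neg_one_pow (hpodd.mul ho), Odd.neg_one_pow ho]
  have key2 : ζ ^ (k + m * Q) * ζ ^ (n - k - 1) * ζ ^ (m * S)
      * ζ ^ ((n - 1) * (m - 1)) * (-1:ℂ) ^ (n - k - 1) = -(-1:ℂ) ^ k := by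
    rw [← pow_add, ← pow_add, ← pow_add, ← hTdef, keyT, ← pow_add,
      show n + (n - k - 1) = (k + 1) + 2 * (n - k - 1) by omega, pow_add, pow_mul]
    norm_num [pow_succ]
  -- nonvanishing of the denominator
  have hP2ne : P2 ≠ 0 := by
    rw [hP2def]
    apply Finset.prod_ne_zero_iff.mpr
    intro j hj
    simp only [Finset.mem_Icc] at hj
    apply sub_ne_zero.mpr
    apply hζprim.pow_ne_one_of_pos_of_lt (Nat.mul_ne_zero (by omega) (by omega))
    have hb1 : m * j ≤ m * (n - 2) := Nat.mul_le_mul_left _ (by omega)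
    have hb2 : m * (n - 2) + m = m * (n - 1) := by
      rw [← Nat.mul_succ]; congr 1; omega
    omega
  have hA : ζ ^ (n - k) - 1 ≠ 0 :=
    sub_ne_zero.mpr (hζprim.pow_ne_one_of_pos_of_lt (by omega) (by omega))
  have hC : ζ ^ k - 1 ≠ 0 :=
    sub_ne_zero.mpr (hζprim.pow_ne_one_of_pos_of_lt (by omega) (by omega))
  have hNne : ζ ^ n - 1 ≠ 0 :=
    sub_ne_zero.mpr (hζprim.pow_ne_one_of_pos_of_lt (by omega) hnH)
  have hB : ζ ^ (k - 1) - ζ ^ k * μ p ≠ 0 := by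
    rw [f4, neg_ne_zero]
    exact mul_ne_zero (pow_ne_zero _ hζne) hNne
  have hD : D ≠ 0 := by
    rw [hDdef]
    exact mul_ne_zero (mul_ne_zero (mul_ne_zero (mul_ne_zero hm0 hA) hB) hC) hP2ne
  refine ⟨hD, ?_⟩
  rw [div_eq_iff hD, hDdef, f2, f3, f4, f5, f6]
  linear_combination ((m:ℂ) * ζ ^ (k - 1) * (ζ ^ n - 1) * (ζ ^ k - 1) * (ζ ^ (n - k) - 1) * P2) * key2
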